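/- Let p be a prime, let L be a field of characteristic p with algebraic closure L̄, let γ ∈ L, and let d ≥ 2 be an integer. Then the set of λ ∈ L̄ such that γ (viewed in L̄) is preperiodic under f_λ(x) = x^d + λ is infinite. -/

import Mathlib

open Polynomial Finset

namespace Prep18

variable {K : Type*} [Field K]

/-- iterate polynomial in the parameter: `U γ d k` evaluated at `s` is `f_s^[k] γ`. -/
noncomputable def U (γ : K) (d : ℕ) : ℕ → K[X]
  | 0 => C γ
  | (k+1) => (U γ d k) ^ d + X

lemma evalU (γ : K) (d : ℕ) (s : K) : ∀ k, eval s (U γ d k) = (fun x => x ^ d + s)^[k] γ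
  | 0 => by simp [U]
  | (k+1) => by
      rw [U, eval_add, eval_pow, eval_X, Function.iterate_succ_apply', evalU γ d s k]

lemma monicU (γ : K) {d : ℕ} (hd : 2 ≤ d) :
    ∀ k, Monic (U γ d (k+1)) ∧ (U γ d (k+1)).natDegree = d ^ k
  | 0 => by
      have : U γ d 1 = X + C (γ ^ d) := by
        rw [U, U, ← C_pow]; ring
      rw [this]
      exact ⟨monic_X_add_C _, natDegree_X_add_C _⟩
  | (k+1) => by
      obtain ⟨hm, hdeg⟩ := monicU γ hd k
      have hmp : Monic ((U γ d (k+1)) ^ d) := hm.pow d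
      have hdp : ((U γ d (k+1)) ^ d).natDegree = d ^ (k+1) := by
        rw [hm.natDegree_pow, hdeg, ← pow_succ']
      have hlt : degree (X : K[X]) < degree ((U γ d (k+1)) ^ d) := by
        rw [degree_X, degree_eq_natDegree hmp.ne_zero, hdp]
        exact_mod_cast one_lt_pow₀ (by omega : 1 < d) (Nat.succ_ne_zero k)
      constructor
      · rw [U]; exact hmp.add_of_left hlt
      · rw [U, natDegree_add_eq_left_of_degree_lt hlt, hdp]

lemma natDegU_lt (γ : K) {d : ℕ} (hd : 2 ≤ d) (n : ℕ) : (U γ d n).natDegree < d ^ n := by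
  cases n with
  | zero => simp [U]
  | succ k =>
      rw [(monicU γ hd k).2]
      exact Nat.pow_lt_pow_succ (by omega)

lemma degU_lt (γ : K) {d : ℕ} (hd : 2 ≤ d) (n : ℕ) :
    degree (U γ d n) < ((d ^ n : ℕ) : WithBot ℕ) :=
  lt_of_le_of_lt (degree_le_natDegree)
    (by exact_mod_cast natDegU_lt γ hd n)

/-- the difference polynomial whose roots are parameters with `f^[n+1] γ = f^[n] γ`. -/
noncomputable def Q (γ : K) (d : ℕ) (n : ℕ) : K[X] := U γ d (n+1) - U γ d n

lemma monicQ (γ : K) {d : ℕ} (hd : 2 ≤ d) (n : ℕ) :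
    Monic (Q γ d n) ∧ (Q γ d n).natDegree = d ^ n := by
  obtain ⟨hm, hdeg⟩ := monicU γ hd n
  have hlt : degree (U γ d n) < degree (U γ d (n+1)) := by
    rw [degree_eq_natDegree hm.ne_zero, hdeg]; exact degU_lt γ hd n
  constructor
  · exact hm.sub_of_left hlt
  · rw [Q, natDegree_sub_eq_left_of_natDegree_lt, hdeg]
    rw [hdeg]; exact natDegU_lt γ hd n

lemma set_infinite_of_finsets {α : Type*} {T : Set α}
    (h : ∀ N : ℕ, ∃ F : Finset α, ↑F ⊆ T ∧ N ≤ F.card) : T.Infinite := by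
  intro hfin
  obtain ⟨F, hsub, hcard⟩ := h (hfin.toFinset.card + 1)
  have hFsub : F ⊆ hfin.toFinset := fun x hx => hfin.mem_toFinset.2 (hsub hx)
  have := Finset.card_le_card hFsub
  omega

end Prep18

namespace Prep18

variable {K : Type*} [Field K]

lemma U_succ (γ : K) (d k : ℕ) : U γ d (k+1) = U γ d k ^ d + X := by rw [U]

lemma derivU_eq_one {d : ℕ} (hd0 : (d : K) = 0) (γ : K) (k : ℕ) :
    derivative (U γ d (k+1)) = 1 := by
  rw [U_succ, derivative_add, derivative_pow, derivative_X, hd0]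
  simp

lemma evalU_zero (γ : K) (d : ℕ) : ∀ k, eval (0 : K) (U γ d k) = γ ^ d ^ k
  | 0 => by simp [U]
  | (k+1) => by
      rw [U_succ, eval_add, eval_pow, eval_X, evalU_zero γ d k, add_zero, ← pow_mul,
        ← pow_succ]

/-- Case `p ∣ d`. -/
lemma infinite_case_dvd (p : ℕ) [Fact p.Prime] [IsAlgClosed K] [CharP K p] (γ : K)
    {d : ℕ} (hd : 2 ≤ d) (hdvd : p ∣ d) :
    {lam : K | ∃ m n : ℕ, m < n ∧
      (fun x => x ^ d + lam)^[m] γ = (fun x => x ^ d + lam)^[n] γ}.Infinite := by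
  have hd0 : (d : K) = 0 := (CharP.cast_eq_zero_iff K p d).2 hdvd
  apply set_infinite_of_finsets
  intro N
  set P : K[X] := U γ d (N+1) - C γ with hP
  have hder : derivative P = 1 := by
    rw [hP, derivative_sub, derivative_C, sub_zero, derivU_eq_one hd0]
  have hsep : P.Separable := by
    rw [Polynomial.Separable, hder]; exact isCoprime_one_right
  have hdeg : P.natDegree = d ^ N := by rw [hP, natDegree_sub_C, (monicU γ hd N).2]
  have hcard : Fintype.card (P.rootSet K) = d ^ N :=
    (card_rootSet_eq_natDegree hsep (IsAlgClosed.splits _)).trans hdeg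
  refine ⟨(P.rootSet K).toFinset, ?_, ?_⟩
  · rw [Set.coe_toFinset]
    intro x hx
    rw [mem_rootSet] at hx
    have h0 : eval x P = 0 := by rw [← coe_aeval_eq_eval]; exact hx.2
    rw [hP, eval_sub, eval_C, sub_eq_zero] at h0
    refine ⟨0, N+1, Nat.succ_pos _, ?_⟩
    rw [Function.iterate_zero_apply, ← evalU, h0]
  · rw [Set.toFinset_card, hcard]
    calc N ≤ 2 ^ N := (Nat.lt_two_pow_self (n := N)).le
    _ ≤ d ^ N := Nat.pow_le_pow_left hd N

/-- Case `γ = 0`. -/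
lemma infinite_case_zero (p : ℕ) [Fact p.Prime] [IsAlgClosed K] [CharP K p]
    {d : ℕ} (hd : 2 ≤ d) :
    {lam : K | ∃ m n : ℕ, m < n ∧
      (fun x => x ^ d + lam)^[m] (0 : K) = (fun x => x ^ d + lam)^[n] (0 : K)}.Infinite := by
  have hp : p.Prime := Fact.out
  apply set_infinite_of_finsets
  intro N
  set q := p ^ (N + 1) with hq
  have hq2 : 2 ≤ q := le_trans hp.two_le (Nat.le_self_pow (Nat.succ_ne_zero N) p)
  set W : K[X] := X ^ q - X with hW
  have hdegW : W.natDegree = q := by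
    rw [hW, natDegree_sub_eq_left_of_natDegree_lt, natDegree_X_pow]
    rw [natDegree_X_pow, natDegree_X]; omega
  have hWne : W ≠ 0 := by
    intro h
    rw [h, natDegree_zero] at hdegW; omega
  have hqK : ((q : K)) = 0 := by
    rw [hq, Nat.cast_pow, CharP.cast_eq_zero K p, zero_pow (Nat.succ_ne_zero N)]
  have hder : derivative W = -1 := by
    rw [hW, derivative_sub, derivative_X_pow, derivative_X, hqK]
    simp
  have hsep : W.Separable := by
    rw [Polynomial.Separable, hder]; exact (isCoprime_one_right).neg_right
  have hcard : Fintype.card (W.rootSet K) = q :=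
    (card_rootSet_eq_natDegree hsep (IsAlgClosed.splits _)).trans hdegW
  refine ⟨(W.rootSet K).toFinset, ?_, ?_⟩
  · rw [Set.coe_toFinset]
    intro lam hlam
    rw [mem_rootSet] at hlam
    have hlq : lam ^ q = lam := by
      have h0 : eval lam W = 0 := by rw [← coe_aeval_eq_eval]; exact hlam.2
      rw [hW, eval_sub, eval_pow, eval_X, sub_eq_zero] at h0
      exact h0
    set E : Set K := {x : K | x ^ q = x} with hE
    have hEfin : E.Finite := by
      apply Set.Finite.subset (rootSet_finite W K)
      intro x hx
      rw [mem_rootSet]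
      refine ⟨hWne, ?_⟩
      rw [coe_aeval_eq_eval, hW, eval_sub, eval_pow, eval_X, sub_eq_zero]
      exact hx
    have horb : ∀ n, ((fun x => x ^ d + lam)^[n] (0 : K)) ∈ E := by
      intro n
      induction n with
      | zero => show (0:K) ^ q = 0; exact zero_pow (by omega : q ≠ 0)
      | succ n ih =>
          rw [Function.iterate_succ_apply']
          set x := (fun x => x ^ d + lam)^[n] (0 : K)
          have hx : x ^ q = x := ih
          show (x ^ d + lam) ^ q = x ^ d + lam
          rw [hq] at hx hlq ⊢
          rw [add_pow_char_pow, ← pow_right_comm, hx, hlq]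
    haveI : Finite ↥E := hEfin.to_subtype
    obtain ⟨m, n, hmn, heq⟩ := Finite.exists_ne_map_eq_of_infinite
      (fun n : ℕ => (⟨(fun x => x ^ d + lam)^[n] (0 : K), horb n⟩ : E))
    have heq' : (fun x => x ^ d + lam)^[m] (0 : K) = (fun x => x ^ d + lam)^[n] (0 : K) :=
      congrArg Subtype.val heq
    rcases hmn.lt_or_gt with h | h
    · exact ⟨m, n, h, heq'⟩
    · exact ⟨n, m, h, heq'.symm⟩
  · rw [Set.toFinset_card, hcard, hq]
    calc N ≤ 2 ^ N := (Nat.lt_two_pow_self (n := N)).le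
    _ ≤ 2 ^ (N+1) := Nat.pow_le_pow_right (by omega) (by omega)
    _ ≤ p ^ (N+1) := Nat.pow_le_pow_left hp.two_le _

end Prep18

namespace Prep18

variable {K : Type*} [Field K]

/-- Case `p ∤ d`, `γ ≠ 0`. -/
lemma infinite_case_gen (p : ℕ) [Fact p.Prime] [IsAlgClosed K] [CharP K p] {γ : K}
    (hγ : γ ≠ 0) {d : ℕ} (hd : 2 ≤ d) (hnd : ¬ p ∣ d) :
    {lam : K | ∃ m n : ℕ, m < n ∧
      (fun x => x ^ d + lam)^[m] γ = (fun x => x ^ d + lam)^[n] γ}.Infinite := by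
  classical
  by_contra hinf
  have hfin : {lam : K | ∃ m n : ℕ, m < n ∧
      (fun x => x ^ d + lam)^[m] γ = (fun x => x ^ d + lam)^[n] γ}.Finite :=
    Set.not_infinite.mp hinf
  have hQne : ∀ n, Q γ d n ≠ 0 := fun n => ((monicQ γ hd n).1).ne_zero
  have hfac : ∀ n, Q γ d (n+1) =
      (∑ i ∈ range d, U γ d (n+1) ^ i * U γ d n ^ (d-1-i)) * Q γ d n := by
    intro n
    have h := geom_sum₂_mul (U γ d (n+1)) (U γ d n) d
    calc Q γ d (n+1) = U γ d (n+1) ^ d - U γ d n ^ d := by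
          rw [Q, U_succ γ d (n+1), U_succ γ d n]; ring
    _ = _ := h.symm
  have hmult : ∀ (s : K) (n : ℕ), rootMultiplicity s (Q γ d (n+1)) =
      rootMultiplicity s (∑ i ∈ range d, U γ d (n+1) ^ i * U γ d n ^ (d-1-i)) +
        rootMultiplicity s (Q γ d n) := by
    intro s n
    rw [hfac n]
    exact rootMultiplicity_mul (by rw [← hfac n]; exact hQne (n+1))
  have hbound : ∀ s : K, ∃ B : ℕ, ∀ n, rootMultiplicity s (Q γ d n) ≤ B := by
    intro s
    by_cases h : ∃ n, (Q γ d n).IsRoot s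
    · set m0 := Nat.find h with hm0
      have hroot : (Q γ d m0).IsRoot s := Nat.find_spec h
      set a := eval s (U γ d m0) with ha
      have hUfix : eval s (U γ d (m0+1)) = eval s (U γ d m0) := by
        have h1 : eval s (Q γ d m0) = 0 := hroot
        rw [Q, eval_sub, sub_eq_zero] at h1
        exact h1
      have hafix : a ^ d + s = a := by
        calc a ^ d + s = eval s (U γ d (m0+1)) := by
              rw [U_succ, eval_add, eval_pow, eval_X, ha]
        _ = a := hUfix
      have hane : a ≠ 0 := by
        intro h0
        have hs0 : s = 0 := by
          rw [h0, zero_pow (by omega : d ≠ 0), zero_add] at hafix; exact hafix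
        rw [hs0] at ha
        rw [evalU_zero] at ha
        rw [h0] at ha
        exact hγ (pow_eq_zero_iff (by positivity : d ^ m0 ≠ 0) |>.mp ha.symm)
      have hUa : ∀ t, eval s (U γ d (m0 + t)) = a := by
        intro t
        induction t with
        | zero => rw [Nat.add_zero, ha]
        | succ t ih =>
            rw [show m0 + (t+1) = (m0 + t) + 1 from rfl, U_succ, eval_add, eval_pow,
              eval_X, ih, hafix]
      have hGne : ∀ n, m0 ≤ n →
          ¬ (∑ i ∈ range d, U γ d (n+1) ^ i * U γ d n ^ (d-1-i)).IsRoot s := by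
        intro n hn hr
        obtain ⟨t, rfl⟩ := Nat.exists_eq_add_of_le hn
        have e1 : eval s (U γ d (m0 + t)) = a := hUa t
        have e2 : eval s (U γ d (m0 + t + 1)) = a := hUa (t+1)
        have : eval s (∑ i ∈ range d, U γ d (m0+t+1) ^ i * U γ d (m0+t) ^ (d-1-i)) = 0 := hr
        rw [eval_finset_sum] at this
        simp only [eval_mul, eval_pow, e1, e2] at this
        rw [Finset.sum_congr rfl (fun i hi => by
          rw [← pow_add]
          congr 1
          have := mem_range.mp hi
          omega : ∀ i ∈ range d, a ^ i * a ^ (d-1-i) = a ^ (d-1)),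
          Finset.sum_const, card_range, nsmul_eq_mul] at this
        have hdK : (d : K) ≠ 0 := fun hz => hnd ((CharP.cast_eq_zero_iff K p d).1 hz)
        exact mul_ne_zero hdK (pow_ne_zero _ hane) this
      have hconst : ∀ n, m0 ≤ n →
          rootMultiplicity s (Q γ d n) = rootMultiplicity s (Q γ d m0) := by
        intro n hn
        induction n, hn using Nat.le_induction with
        | base => rfl
        | succ n hn ih =>
            rw [hmult s n, rootMultiplicity_eq_zero (hGne n hn), zero_add, ih]
      refine ⟨rootMultiplicity s (Q γ d m0), fun n => ?_⟩
      rcases le_or_gt m0 n with h1 | h1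
      · exact (hconst n h1).le
      · rw [rootMultiplicity_eq_zero (Nat.find_min h h1)]
        exact Nat.zero_le _
    · push_neg at h
      exact ⟨0, fun n => le_of_eq (rootMultiplicity_eq_zero (h n))⟩
  choose B hB using hbound
  set Ctot := ∑ s ∈ hfin.toFinset, B s with hC
  have hled : ∀ n, d ^ n ≤ Ctot := by
    intro n
    have hsplits : Multiset.card (Q γ d n).roots = (Q γ d n).natDegree :=
      splits_iff_card_roots.mp (IsAlgClosed.splits _)
    have hcard : Multiset.card (Q γ d n).roots = d ^ n := by
      rw [hsplits, (monicQ γ hd n).2]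
    have hsub : (Q γ d n).roots.toFinset ⊆ hfin.toFinset := by
      intro x hx
      rw [Multiset.mem_toFinset, mem_roots (hQne n)] at hx
      rw [Set.Finite.mem_toFinset]
      have hx2 : eval x (U γ d (n+1)) = eval x (U γ d n) := by
        have h2 : eval x (Q γ d n) = 0 := hx
        rw [Q, eval_sub, sub_eq_zero] at h2
        exact h2
      exact ⟨n, n+1, Nat.lt_succ_self n, by rw [← evalU, ← evalU]; exact hx2.symm⟩
    calc d ^ n = ∑ x ∈ (Q γ d n).roots.toFinset, (Q γ d n).roots.count x := by
          rw [Multiset.toFinset_sum_count_eq, hcard]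
    _ = ∑ x ∈ (Q γ d n).roots.toFinset, rootMultiplicity x (Q γ d n) :=
          Finset.sum_congr rfl (fun x _ => count_roots _)
    _ ≤ ∑ x ∈ hfin.toFinset, rootMultiplicity x (Q γ d n) :=
          Finset.sum_le_sum_of_subset hsub
    _ ≤ ∑ x ∈ hfin.toFinset, B x := Finset.sum_le_sum (fun x _ => hB x n)
  have h1 := hled (Ctot + 1)
  have h2 : Ctot + 1 ≤ 2 ^ (Ctot + 1) := Nat.lt_two_pow_self.le
  have h3 : 2 ^ (Ctot + 1) ≤ d ^ (Ctot + 1) := Nat.pow_le_pow_left hd _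
  omega

theorem aux (p : ℕ) [Fact p.Prime] (K : Type*) [Field K] [IsAlgClosed K] [CharP K p]
    (γ : K) (d : ℕ) (hd : 2 ≤ d) :
    {lam : K | ∃ m n : ℕ, m < n ∧
      (fun x => x ^ d + lam)^[m] γ = (fun x => x ^ d + lam)^[n] γ}.Infinite := by
  by_cases hdvd : p ∣ d
  · exact infinite_case_dvd p γ hd hdvd
  by_cases hγ : γ = 0
  · subst hγ; exact infinite_case_zero p hd
  · exact infinite_case_gen p hγ hd hdvd

end Prep18

theorem infinitely_many_preperiodic_parameters
    (p : ℕ) [Fact p.Prime] (L : Type*) [Field L] [CharP L p]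
    (γ : L) (d : ℕ) (hd : 2 ≤ d) :
    {lam : AlgebraicClosure L |
        ∃ m n : ℕ, m < n ∧
          (fun x : AlgebraicClosure L => x ^ d + lam)^[m] (algebraMap L (AlgebraicClosure L) γ)
            = (fun x : AlgebraicClosure L => x ^ d + lam)^[n]
                (algebraMap L (AlgebraicClosure L) γ)}.Infinite :=
  Prep18.aux p (AlgebraicClosure L) (algebraMap L (AlgebraicClosure L) γ) d hd
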